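/- Let Ω ⊆ ℝⁿ be open and u ∈ C²(Ω, ℝᴺ). Then every diffuse hessian of u equals the Dirac measure at the classical hessian: 𝒟²u(x) = δ_{D²u(x)} for almost every x ∈ Ω. Consequently, u is a 𝒟-solution of a system F(Du, D²u) = 0 (with F Borel in the first and continuous in the second argument) if and only if u is a classical solution, i.e. F(Du(x), D²u(x)) = 0 for a.e. x ∈ Ω. -/

import Mathlib

open scoped BigOperators
open MeasureTheory Filter

/-- The gradient matrix `Du(x) ∈ ℝ^{N×n}` of `u : ℝⁿ → ℝᴺ`. -/
noncomputable def gradm {n N : ℕ} (u : (Fin n → ℝ) → (Fin N → ℝ)) (x : Fin n → ℝ) :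
    Matrix (Fin N) (Fin n) ℝ :=
  fun α i => fderiv ℝ u x (Pi.single i 1) α

/-- The Frobenius (Euclidean) norm of an `N×n` matrix. -/
noncomputable def mnorm {n N : ℕ} (M : Matrix (Fin N) (Fin n) ℝ) : ℝ :=
  Real.sqrt (∑ α, ∑ i, (M α i) ^ 2)

/-- The difference quotients `D^{1,h}Du(x)` of the gradient, as a tensor:
`(D^{1,h}Du(x))_{αij} = (D_j u_α(x + h e_i) − D_j u_α(x))/h`. -/
noncomputable def Dq {n N : ℕ} (u : (Fin n → ℝ) → (Fin N → ℝ)) (h : ℝ) (x : Fin n → ℝ) :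
    Fin N → Fin n → Fin n → ℝ :=
  fun α i j => (gradm u (fun k => x k + (if k = i then h else 0)) α j - gradm u x α j) / h

/-- The Borel σ-algebra on the one-point compactification of the tensor space. -/
noncomputable instance {n N : ℕ} :
    MeasurableSpace (OnePoint (Fin N → Fin n → Fin n → ℝ)) := borel _

/-- A map `ϑ` into probability measures on the one-point compactification of the tensor
space is a diffuse hessian of `u` on `Ω` when it is a weak* limit in the Young measures of
the Dirac measures of difference quotients `δ_{D^{1,h_ν}Du}` along an infinitesimal
sequence `h_ν → 0`, tested against all integrands `Φ ∈ L¹(Ω, C⁰(compactification))`. -/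
def DiffuseHessian {n N : ℕ} (Ω : Set (Fin n → ℝ))
    (u : (Fin n → ℝ) → (Fin N → ℝ))
    (ϑ : (Fin n → ℝ) → Measure (OnePoint (Fin N → Fin n → Fin n → ℝ))) : Prop :=
  (∀ x, IsProbabilityMeasure (ϑ x)) ∧
  ∃ hs : ℕ → ℝ, (∀ k, hs k ≠ 0) ∧ Tendsto hs atTop (nhds 0) ∧
    ∀ Φ : (Fin n → ℝ) → C(OnePoint (Fin N → Fin n → Fin n → ℝ), ℝ),
      Integrable Φ (volume.restrict Ω) →
      Tendsto (fun k => ∫ x in Ω, Φ x (OnePoint.some (Dq u (hs k) x)))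
        atTop (nhds (∫ x in Ω, ∫ X, Φ x X ∂(ϑ x)))

/-- Membership in the support of a measure on a topological space. -/
def MemSupp {S : Type*} [TopologicalSpace S] [MeasurableSpace S]
    (ϑ : MeasureTheory.Measure S) (X : S) : Prop :=
  ∀ U : Set S, IsOpen U → X ∈ U → 0 < ϑ U

/-- The hessian tensor `D²u(x)`, with `(D²u(x))_{αij} = D_i D_j u_α (x)`. -/
noncomputable def hessTensor {n N : ℕ} (u : (Fin n → ℝ) → (Fin N → ℝ)) (x : Fin n → ℝ) :
    Fin N → Fin n → Fin n → ℝ :=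
  fun α i j => fderiv ℝ (fun y => gradm u y α j) x (Pi.single i 1)

instance {n N : ℕ} : BorelSpace (OnePoint (Fin N → Fin n → Fin n → ℝ)) := ⟨rfl⟩

variable {n N : ℕ}

lemma tendsto_Dq {Ω : Set (Fin n → ℝ)} (hΩ : IsOpen Ω) {u : (Fin n → ℝ) → (Fin N → ℝ)}
    (hu : ContDiffOn ℝ 2 u Ω) {x : Fin n → ℝ} (hx : x ∈ Ω) {hs : ℕ → ℝ}
    (h0 : ∀ k, hs k ≠ 0) (hlim : Tendsto hs atTop (nhds 0)) :
    Tendsto (fun k => Dq u (hs k) x) atTop (nhds (hessTensor u x)) := by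
  rw [tendsto_pi_nhds]; intro α
  rw [tendsto_pi_nhds]; intro i
  rw [tendsto_pi_nhds]; intro j
  have hW : ContDiffOn ℝ 1 (fderiv ℝ u) Ω := hu.fderiv_of_isOpen hΩ (by norm_num)
  have hdiff : DifferentiableAt ℝ (fun y => gradm u y α j) x := by
    have h2 : DifferentiableAt ℝ (fderiv ℝ u) x :=
      (hW.differentiableOn one_ne_zero).differentiableAt (hΩ.mem_nhds hx)
    have h3 : DifferentiableAt ℝ (fun y => fderiv ℝ u y (Pi.single j 1)) x :=
      h2.clm_apply (differentiableAt_const _)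
    exact differentiableAt_pi.mp h3 α
  have hc : Tendsto (fun k => ‖(hs k)⁻¹‖) atTop atTop := by
    have h1 : Tendsto (fun k => |hs k|) atTop (nhdsWithin 0 (Set.Ioi 0)) := by
      apply tendsto_nhdsWithin_of_tendsto_nhds_of_eventually_within
      · simpa using hlim.abs
      · exact Eventually.of_forall fun k => abs_pos.mpr (h0 k)
    have := tendsto_inv_nhdsGT_zero.comp h1
    simpa [Real.norm_eq_abs, abs_inv, Function.comp_def] using this
  have hlim2 := hdiff.hasFDerivAt.lim (Pi.single i 1) hc
  have hDq : ∀ k, Dq u (hs k) x α i j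
      = (hs k)⁻¹ • ((fun y => gradm u y α j) (x + ((hs k)⁻¹)⁻¹ • (Pi.single i 1 : Fin n → ℝ))
          - (fun y => gradm u y α j) x) := by
    intro k
    have hxk : (fun k' => x k' + (if k' = i then hs k else 0))
        = (x + ((hs k)⁻¹)⁻¹ • (Pi.single i 1 : Fin n → ℝ)) := by
      funext k'
      simp [inv_inv, Pi.single_apply, mul_ite]
    simp only [Dq, hxk, smul_eq_mul, div_eq_inv_mul]
  exact hlim2.congr fun k => (hDq k).symm

lemma meas_gradm (u : (Fin n → ℝ) → (Fin N → ℝ)) (α : Fin N) (j : Fin n) :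
    Measurable fun x => gradm u x α j :=
  (measurable_pi_apply α).comp (measurable_fderiv_apply_const ℝ u (Pi.single j 1))

lemma sm_hess (u : (Fin n → ℝ) → (Fin N → ℝ)) : StronglyMeasurable (hessTensor u) := by
  apply Measurable.stronglyMeasurable
  apply measurable_pi_lambda; intro α
  apply measurable_pi_lambda; intro i
  apply measurable_pi_lambda; intro j
  exact measurable_fderiv_apply_const ℝ _ _

lemma sm_Dq (u : (Fin n → ℝ) → (Fin N → ℝ)) (h : ℝ) :
    StronglyMeasurable fun x => Dq u h x := by
  apply Measurable.stronglyMeasurable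
  apply measurable_pi_lambda; intro α
  apply measurable_pi_lambda; intro i
  apply measurable_pi_lambda; intro j
  have hc : Continuous fun x : Fin n → ℝ => (fun k => x k + (if k = i then h else 0)) :=
    continuous_pi fun k => (continuous_apply k).add continuous_const
  exact (((meas_gradm u α j).comp hc.measurable).sub (meas_gradm u α j)).div_const h

lemma tendsto_int {Ω : Set (Fin n → ℝ)} (hΩ : IsOpen Ω) {u : (Fin n → ℝ) → (Fin N → ℝ)}
    (hu : ContDiffOn ℝ 2 u Ω) {hs : ℕ → ℝ}
    (h0 : ∀ k, hs k ≠ 0) (hlim : Tendsto hs atTop (nhds 0))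
    (Φ : (Fin n → ℝ) → C(OnePoint (Fin N → Fin n → Fin n → ℝ), ℝ))
    (hΦ : Integrable Φ (volume.restrict Ω)) :
    Tendsto (fun k => ∫ x in Ω, Φ x (OnePoint.some (Dq u (hs k) x))) atTop
      (nhds (∫ x in Ω, Φ x (OnePoint.some (hessTensor u x)))) := by
  apply tendsto_integral_of_dominated_convergence (fun x => ‖Φ x‖)
  · intro k
    exact continuous_eval.comp_aestronglyMeasurable
      (hΦ.aestronglyMeasurable.prodMk
        ((OnePoint.continuous_coe.comp_stronglyMeasurable (sm_Dq u (hs k))).aestronglyMeasurable))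
  · exact hΦ.norm
  · intro k
    exact Eventually.of_forall fun x => (Φ x).norm_coe_le_norm _
  · filter_upwards [ae_restrict_mem hΩ.measurableSet] with x hx
    exact (((Φ x).continuous.comp OnePoint.continuous_coe).continuousAt.tendsto).comp
      (tendsto_Dq hΩ hu hx h0 hlim)

lemma diffuse_dirac {Ω : Set (Fin n → ℝ)} (hΩ : IsOpen Ω) {u : (Fin n → ℝ) → (Fin N → ℝ)}
    (hu : ContDiffOn ℝ 2 u Ω) :
    DiffuseHessian Ω u (fun x => Measure.dirac (OnePoint.some (hessTensor u x))) := by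
  refine ⟨fun x => inferInstance, fun k => ((k : ℝ) + 1)⁻¹, fun k => by positivity, ?_, ?_⟩
  · exact tendsto_one_div_add_atTop_nhds_zero_nat.congr fun k => one_div _
  · intro Φ hΦ
    have h1 : ∀ x : Fin n → ℝ,
        ∫ X, Φ x X ∂(Measure.dirac (OnePoint.some (hessTensor u x)))
          = Φ x (OnePoint.some (hessTensor u x)) := fun x =>
      integral_dirac' _ _ ((Φ x).continuous.stronglyMeasurable)
    simp only [h1]
    exact tendsto_int hΩ hu (fun k => by positivity) (by
      exact tendsto_one_div_add_atTop_nhds_zero_nat.congr fun k => one_div _) Φ hΦ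
noncomputable def testFn (q : Fin N → Fin n → Fin n → ℝ) :
    C(OnePoint (Fin N → Fin n → Fin n → ℝ), ℝ) :=
  OnePoint.continuousMapMk
    ⟨fun y => 1 - (1 + dist y q)⁻¹, by
      refine continuous_const.sub (Continuous.inv₀ ?_ fun y => by positivity)
      exact continuous_const.add (continuous_id.dist continuous_const)⟩ 1
    (by
      rw [coclosedCompact_eq_cocompact]
      have h1 : Tendsto (fun y : Fin N → Fin n → Fin n → ℝ => dist y q) (cocompact _) atTop :=
        tendsto_dist_right_cocompact_atTop q
      have h2 : Tendsto (fun y : Fin N → Fin n → Fin n → ℝ => (1 + dist y q)⁻¹)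
          (cocompact _) (nhds 0) :=
        tendsto_inv_atTop_zero.comp (tendsto_atTop_add_const_left _ 1 h1)
      simpa using tendsto_const_nhds.sub h2)

lemma testFn_coe (q y : Fin N → Fin n → Fin n → ℝ) :
    testFn q (OnePoint.some y) = 1 - (1 + dist y q)⁻¹ := rfl

lemma testFn_infty (q : Fin N → Fin n → Fin n → ℝ) :
    testFn q (OnePoint.infty : OnePoint (Fin N → Fin n → Fin n → ℝ)) = 1 := rfl

lemma testFn_nonneg (q : Fin N → Fin n → Fin n → ℝ)
    (X : OnePoint (Fin N → Fin n → Fin n → ℝ)) : 0 ≤ testFn q X := by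
  induction X using OnePoint.rec with
  | infty => rw [testFn_infty]; norm_num
  | coe y =>
    rw [testFn_coe]
    have h1 : (0:ℝ) < 1 + dist y q := by have := dist_nonneg (x := y) (y := q); linarith
    have h2 : (1 + dist y q)⁻¹ ≤ 1 := by
      rw [inv_le_one_iff₀]
      right; have := dist_nonneg (x := y) (y := q); linarith
    linarith

lemma testFn_le_one (q : Fin N → Fin n → Fin n → ℝ)
    (X : OnePoint (Fin N → Fin n → Fin n → ℝ)) : testFn q X ≤ 1 := by
  induction X using OnePoint.rec with
  | infty => rw [testFn_infty]
  | coe y =>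
    rw [testFn_coe]
    have h1 : (0:ℝ) < 1 + dist y q := by have := dist_nonneg (x := y) (y := q); linarith
    have h2 : 0 < (1 + dist y q)⁻¹ := by positivity
    linarith

lemma aux_lip {a b : ℝ} (ha : 0 ≤ a) (hb : 0 ≤ b) :
    |(1 - (1 + a)⁻¹) - (1 - (1 + b)⁻¹)| ≤ |a - b| := by
  have h1 : (0:ℝ) < 1 + a := by linarith
  have h2 : (0:ℝ) < 1 + b := by linarith
  have key : 1 - (1 + a)⁻¹ - (1 - (1 + b)⁻¹) = (a - b) * ((1 + a)⁻¹ * (1 + b)⁻¹) := by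
    field_simp
    ring
  rw [key, abs_mul]
  have h3 : |(1 + a)⁻¹ * (1 + b)⁻¹| ≤ 1 := by
    rw [abs_mul, abs_inv, abs_inv, abs_of_pos h1, abs_of_pos h2]
    have i1 : (1 + a)⁻¹ ≤ 1 := by rw [inv_le_one_iff₀]; right; linarith
    have i2 : (1 + b)⁻¹ ≤ 1 := by rw [inv_le_one_iff₀]; right; linarith
    have i3 : 0 ≤ (1 + a)⁻¹ := by positivity
    have i4 : 0 ≤ (1 + b)⁻¹ := by positivity
    nlinarith
  calc |a - b| * |(1 + a)⁻¹ * (1 + b)⁻¹| ≤ |a - b| * 1 :=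
        mul_le_mul_of_nonneg_left h3 (abs_nonneg _)
    _ = |a - b| := mul_one _

lemma testFn_lip (q q' : Fin N → Fin n → Fin n → ℝ)
    (X : OnePoint (Fin N → Fin n → Fin n → ℝ)) :
    |testFn q X - testFn q' X| ≤ dist q q' := by
  induction X using OnePoint.rec with
  | infty => simp [testFn_infty, dist_nonneg]
  | coe y =>
    rw [testFn_coe, testFn_coe]
    have hab : |dist y q - dist y q'| ≤ dist q q' := by
      rw [dist_comm y q, dist_comm y q']
      exact abs_dist_sub_le q q' y
    exact le_trans (aux_lip dist_nonneg dist_nonneg) hab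

lemma testFn_eq_zero_iff (q : Fin N → Fin n → Fin n → ℝ)
    (X : OnePoint (Fin N → Fin n → Fin n → ℝ)) :
    testFn q X = 0 ↔ X = OnePoint.some q := by
  induction X using OnePoint.rec with
  | infty =>
    simp only [testFn_infty]
    constructor
    · intro h; norm_num at h
    · intro h; exact absurd h (by simp [OnePoint.infty_ne_coe])
  | coe y =>
    rw [testFn_coe]
    have h1 : (0:ℝ) < 1 + dist y q := by have := dist_nonneg (x := y) (y := q); linarith
    constructor
    · intro h
      have : (1 + dist y q)⁻¹ = 1 := by linarith
      have h2 : 1 + dist y q = 1 := by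
        have := congrArg (·⁻¹) this
        simpa using this
      have : dist y q = 0 := by linarith
      simp [dist_eq_zero.mp this]
    · intro h
      have : y = q := by simpa [OnePoint.coe_eq_coe] using h
      simp [this]

lemma testFn_coe_le_dist (q t : Fin N → Fin n → Fin n → ℝ) :
    testFn q (OnePoint.some t) ≤ dist t q := by
  rw [testFn_coe]
  have h1 : (0:ℝ) < 1 + dist t q := by have := dist_nonneg (x := t) (y := q); linarith
  have h2 : 1 - (1 + dist t q)⁻¹ = dist t q * (1 + dist t q)⁻¹ := by field_simp; ring
  rw [h2]
  have h3 : (1 + dist t q)⁻¹ ≤ 1 := by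
    rw [inv_le_one_iff₀]; right
    have := dist_nonneg (x := t) (y := q); linarith
  nlinarith [dist_nonneg (x := t) (y := q), inv_pos.mpr h1]
lemma int_cont (ν : Measure (OnePoint (Fin N → Fin n → Fin n → ℝ))) [IsFiniteMeasure ν]
    (g : C(OnePoint (Fin N → Fin n → Fin n → ℝ), ℝ)) : Integrable (fun X => g X) ν :=
  Integrable.mono' (integrable_const ‖g‖) g.continuous.stronglyMeasurable.aestronglyMeasurable
    (Eventually.of_forall fun X => g.norm_coe_le_norm X)

lemma L1 {Ω : Set (Fin n → ℝ)} (hΩ : IsOpen Ω) {u : (Fin n → ℝ) → (Fin N → ℝ)}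
    (hu : ContDiffOn ℝ 2 u Ω)
    {ϑ : (Fin n → ℝ) → Measure (OnePoint (Fin N → Fin n → Fin n → ℝ))}
    (hϑ : DiffuseHessian Ω u ϑ) (g : C(OnePoint (Fin N → Fin n → Fin n → ℝ), ℝ)) :
    (fun x => ∫ X, g X ∂(ϑ x)) =ᵐ[volume.restrict Ω]
      (fun x => g (OnePoint.some (hessTensor u x))) := by
  obtain ⟨hprob, hs, h0, hslim, hmain⟩ := hϑ
  have hσm : StronglyMeasurable (fun x => OnePoint.some (hessTensor u x)) :=
    OnePoint.continuous_coe.comp_stronglyMeasurable (sm_hess u)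
  have key : ∀ (g' : C(OnePoint (Fin N → Fin n → Fin n → ℝ), ℝ)) (f : (Fin n → ℝ) → ℝ),
      Integrable f (volume.restrict Ω) →
      ∫ x in Ω, f x * (∫ X, g' X ∂ϑ x)
        = ∫ x in Ω, f x * g' (OnePoint.some (hessTensor u x)) := by
    intro g' f hf
    have hΦint : Integrable (fun x => f x • g') (volume.restrict Ω) := hf.smul_const g'
    have t1 := hmain _ hΦint
    have t2 := tendsto_int hΩ hu h0 hslim _ hΦint
    have heq := tendsto_nhds_unique t1 t2
    simp only [ContinuousMap.smul_apply, smul_eq_mul, integral_const_mul] at heq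
    exact heq
  set ψ : (Fin n → ℝ) → ℝ := fun x => ∫ X, g X ∂ϑ x with hψdef
  set φ : (Fin n → ℝ) → ℝ := fun x => g (OnePoint.some (hessTensor u x)) with hφdef
  have hφsm : StronglyMeasurable φ := g.continuous.comp_stronglyMeasurable hσm
  have hφbd : ∀ x, |φ x| ≤ ‖g‖ := fun x => by
    simpa [Real.norm_eq_abs] using (g.norm_coe_le_norm (OnePoint.some (hessTensor u x)))
  have hψbd : ∀ x, |ψ x| ≤ ‖g‖ := by
    intro x
    haveI := hprob x
    calc |ψ x| = ‖∫ X, g X ∂ϑ x‖ := (Real.norm_eq_abs _).symm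
      _ ≤ ‖g‖ * ((ϑ x) Set.univ).toReal := norm_integral_le_of_norm_le_const
            (Eventually.of_forall fun X => g.norm_coe_le_norm X)
      _ = ‖g‖ := by simp
  by_cases hstrong : AEStronglyMeasurable (fun x => ψ x - φ x) (volume.restrict Ω)
  · have hψsm : AEStronglyMeasurable ψ (volume.restrict Ω) :=
      (hstrong.add hφsm.aestronglyMeasurable).congr
        (Eventually.of_forall fun x => by simp only [Pi.add_apply]; ring)
    have hzero : (fun x => ψ x - φ x) =ᵐ[volume.restrict Ω] 0 := by
      apply ae_eq_zero_of_forall_setIntegral_eq_of_sigmaFinite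
      · intro s hsm hsμ
        refine Integrable.mono' (g := fun _ => ‖g‖ + ‖g‖)
          (integrableOn_const hsμ.ne) hstrong.restrict ?_
        refine Eventually.of_forall fun x => ?_
        have h1 := hφbd x; have h2 := hψbd x
        rw [Real.norm_eq_abs]
        calc |ψ x - φ x| ≤ |ψ x| + |φ x| := abs_sub _ _
          _ ≤ ‖g‖ + ‖g‖ := add_le_add h2 h1
      · intro s hsm hsμ
        have hf : Integrable (s.indicator (fun _ => (1:ℝ))) (volume.restrict Ω) := by
          rw [integrable_indicator_iff hsm]
          exact integrableOn_const hsμ.ne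
        have hk := key g _ hf
        have i1 : ∀ (v : (Fin n → ℝ) → ℝ),
            (fun x => s.indicator (fun _ => (1:ℝ)) x * v x) = s.indicator v := by
          intro v; funext x; by_cases hx : x ∈ s <;> simp [hx]
        have hk' : ∫ x in s, ψ x ∂(volume.restrict Ω) = ∫ x in s, φ x ∂(volume.restrict Ω) := by
          rw [← integral_indicator hsm, ← integral_indicator hsm, ← i1 ψ, ← i1 φ]
          exact hk
        have hψint : IntegrableOn ψ s (volume.restrict Ω) :=
          Integrable.mono' (integrableOn_const (C := ‖g‖) hsμ.ne) hψsm.restrict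
            (Eventually.of_forall fun x => by rw [Real.norm_eq_abs]; exact hψbd x)
        have hφint : IntegrableOn φ s (volume.restrict Ω) :=
          Integrable.mono' (integrableOn_const (C := ‖g‖) hsμ.ne) hφsm.aestronglyMeasurable.restrict
            (Eventually.of_forall fun x => by rw [Real.norm_eq_abs]; exact hφbd x)
        rw [integral_sub hψint hφint, hk', sub_self]
    filter_upwards [hzero] with x hx
    have : ψ x - φ x = 0 := hx
    have : ψ x = φ x := by linarith
    exact this
  · exfalso
    obtain ⟨R, hR⟩ : ∃ R : ℕ, ¬ AEStronglyMeasurable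
        (fun x => (Metric.ball (0 : Fin n → ℝ) (R : ℝ)).indicator (fun _ => (1:ℝ)) x
          * (ψ x - φ x)) (volume.restrict Ω) := by
      by_contra hcon
      push_neg at hcon
      apply hstrong
      apply aestronglyMeasurable_of_tendsto_ae atTop hcon
      apply Eventually.of_forall
      intro x
      obtain ⟨M, hM⟩ := exists_nat_gt ‖x‖
      apply tendsto_atTop_of_eventually_const (i₀ := M)
      intro R hRM
      have hxB : x ∈ Metric.ball (0 : Fin n → ℝ) (R : ℝ) := by
        rw [Metric.mem_ball, dist_zero_right]
        exact lt_of_lt_of_le hM (by exact_mod_cast hRM)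
      simp [Set.indicator_of_mem hxB]
    set B := Metric.ball (0 : Fin n → ℝ) (R : ℝ) with hB
    have hBmeas : MeasurableSet B := measurableSet_ball
    have hμBfin : (volume.restrict Ω) B < ⊤ := by
      calc (volume.restrict Ω) B ≤ volume B := by
            rw [Measure.restrict_apply hBmeas]
            exact measure_mono Set.inter_subset_left
        _ < ⊤ := measure_ball_lt_top
    have hμBpos : (volume.restrict Ω) B ≠ 0 := by
      intro hzero0
      apply hR
      have hae : ∀ᵐ x ∂(volume.restrict Ω), x ∉ B := by
        rw [ae_iff]
        simpa [not_not, Set.setOf_mem_eq] using hzero0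
      refine (aestronglyMeasurable_const (b := (0:ℝ))).congr ?_
      filter_upwards [hae] with x hx
      simp [Set.indicator_of_notMem hx]
    set c : ℝ := ‖g‖ + 1 with hcdef
    set g' : C(OnePoint (Fin N → Fin n → Fin n → ℝ), ℝ) := g + c • 1 with hg'
    have hf : Integrable (B.indicator (fun _ => (1:ℝ))) (volume.restrict Ω) := by
      rw [integrable_indicator_iff hBmeas]
      exact integrableOn_const hμBfin.ne
    have hk := key g' _ hf
    have hg'app : ∀ X, g' X = g X + c := by
      intro X
      simp [hg', ContinuousMap.add_apply, ContinuousMap.smul_apply]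
    have hψ' : ∀ x, (∫ X, g' X ∂ϑ x) = ψ x + c := by
      intro x
      haveI := hprob x
      simp only [hg'app]
      rw [integral_add (int_cont _ g) (integrable_const c), integral_const]
      simp [hψdef]
    have hnot : ¬ AEStronglyMeasurable
        (fun x => B.indicator (fun _ => (1:ℝ)) x * (ψ x + c)) (volume.restrict Ω) := by
      intro hA
      apply hR
      have hee : (fun x => B.indicator (fun _ => (1:ℝ)) x * (ψ x - φ x))
          = fun x => B.indicator (fun _ => (1:ℝ)) x * (ψ x + c)
            - B.indicator (fun _ => (1:ℝ)) x * (φ x + c) := by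
        funext x; ring
      rw [hee]
      exact hA.sub (((stronglyMeasurable_const.indicator hBmeas).mul
        (hφsm.add stronglyMeasurable_const)).aestronglyMeasurable)
    have hL : (∫ x in Ω, B.indicator (fun _ => (1:ℝ)) x * (∫ X, g' X ∂ϑ x)) = 0 := by
      have he2 : (fun x => B.indicator (fun _ => (1:ℝ)) x * (∫ X, g' X ∂ϑ x))
          = fun x => B.indicator (fun _ => (1:ℝ)) x * (ψ x + c) := by
        funext x; rw [hψ' x]
      calc (∫ x in Ω, B.indicator (fun _ => (1:ℝ)) x * (∫ X, g' X ∂ϑ x))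
          = ∫ x in Ω, B.indicator (fun _ => (1:ℝ)) x * (ψ x + c) := by rw [he2]
        _ = 0 := integral_non_aestronglyMeasurable hnot
    have he3 : (fun x => B.indicator (fun _ => (1:ℝ)) x * g' (OnePoint.some (hessTensor u x)))
        = B.indicator (fun x => φ x + c) := by
      funext x
      by_cases hx : x ∈ B <;> simp [hx, hg'app, hφdef]
    have hRHS : (∫ x in Ω, B.indicator (fun _ => (1:ℝ)) x * g' (OnePoint.some (hessTensor u x)))
        ≥ ((volume.restrict Ω) B).toReal := by
      have hint : Integrable (fun x => φ x + c) ((volume.restrict Ω).restrict B) :=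
        Integrable.mono' (g := fun _ => ‖g‖ + |c|) (integrableOn_const hμBfin.ne)
          (hφsm.add stronglyMeasurable_const).aestronglyMeasurable.restrict
          (Eventually.of_forall fun x => by
            rw [Real.norm_eq_abs]
            calc |φ x + c| ≤ |φ x| + |c| := abs_add_le _ _
              _ ≤ ‖g‖ + |c| := add_le_add (hφbd x) le_rfl)
      calc (∫ x in Ω, B.indicator (fun _ => (1:ℝ)) x * g' (OnePoint.some (hessTensor u x)))
          = ∫ x, B.indicator (fun x => φ x + c) x ∂(volume.restrict Ω) := by rw [he3]
        _ = ∫ x in B, (φ x + c) ∂(volume.restrict Ω) := integral_indicator hBmeas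
        _ ≥ ∫ x in B, (1:ℝ) ∂(volume.restrict Ω) := by
            refine integral_mono (integrableOn_const hμBfin.ne) hint fun x => ?_
            have := abs_le.mp (hφbd x)
            rw [hcdef]; dsimp; linarith [this.1]
        _ = ((volume.restrict Ω) B).toReal := by
            rw [integral_const]
            simp [Measure.restrict_apply_univ, Measure.real]
    have hpos : 0 < ((volume.restrict Ω) B).toReal := ENNReal.toReal_pos hμBpos hμBfin.ne
    rw [hL] at hk
    linarith [hk, hRHS, hpos]
lemma P1 {Ω : Set (Fin n → ℝ)} (hΩ : IsOpen Ω) {u : (Fin n → ℝ) → (Fin N → ℝ)}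
    (hu : ContDiffOn ℝ 2 u Ω)
    {ϑ : (Fin n → ℝ) → Measure (OnePoint (Fin N → Fin n → Fin n → ℝ))}
    (hϑ : DiffuseHessian Ω u ϑ) :
    ∀ᵐ x ∂(volume.restrict Ω), ϑ x = Measure.dirac (OnePoint.some (hessTensor u x)) := by
  have hprob := hϑ.1
  obtain ⟨Q, hQc, hQd⟩ := TopologicalSpace.exists_countable_dense (Fin N → Fin n → Fin n → ℝ)
  have hae : ∀ᵐ x ∂(volume.restrict Ω), ∀ q ∈ Q,
      ∫ X, testFn q X ∂ϑ x = testFn q (OnePoint.some (hessTensor u x)) := by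
    rw [ae_ball_iff hQc]
    intro q _
    exact L1 hΩ hu hϑ (testFn q)
  filter_upwards [hae] with x hx
  haveI := hprob x
  set t := hessTensor u x with ht
  have hzero : ∫ X, testFn t X ∂ϑ x = 0 := by
    have hnn : 0 ≤ ∫ X, testFn t X ∂ϑ x := integral_nonneg (testFn_nonneg t)
    refine le_antisymm (le_of_forall_pos_le_add ?_) hnn
    intro ε hε
    obtain ⟨q, hqQ, hqd⟩ := Metric.mem_closure_iff.mp (hQd t) (ε/3) (by positivity)
    have hmono : ∫ X, testFn t X ∂ϑ x ≤ ∫ X, (testFn q X + dist t q) ∂ϑ x := by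
      refine integral_mono (int_cont _ (testFn t))
        ((int_cont _ (testFn q)).add (integrable_const _)) fun X => ?_
      have h1 := abs_le.mp (testFn_lip t q X)
      linarith [h1.2]
    have heval : ∫ X, (testFn q X + dist t q) ∂ϑ x = testFn q (OnePoint.some t) + dist t q := by
      rw [integral_add (int_cont _ (testFn q)) (integrable_const _), integral_const]
      rw [hx q hqQ]
      simp
    have hle : testFn q (OnePoint.some t) ≤ dist t q := testFn_coe_le_dist q t
    linarith [hmono, heval ▸ hmono]
  have hball : (ϑ x) {OnePoint.some t}ᶜ = 0 := by
    have hae0 : (fun X => testFn t X) =ᵐ[ϑ x] 0 :=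
      (integral_eq_zero_iff_of_nonneg (testFn_nonneg t) (int_cont _ (testFn t))).mp hzero
    have h1 : (ϑ x) {X | ¬ testFn t X = 0} = 0 := by
      have := ae_iff.mp hae0
      simpa using this
    refine measure_mono_null ?_ h1
    intro X hX
    simp only [Set.mem_compl_iff, Set.mem_singleton_iff] at hX
    simp only [Set.mem_setOf_eq]
    intro h0'
    exact hX ((testFn_eq_zero_iff t X).mp h0')
  ext s hsm
  by_cases hps : OnePoint.some t ∈ s
  · have h1 : (ϑ x) sᶜ = 0 :=
      measure_mono_null (fun X hX => by
        simp only [Set.mem_compl_iff, Set.mem_singleton_iff]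
        intro hXe; exact hX (hXe ▸ hps)) hball
    have h2 : (ϑ x) s = 1 := by
      have h3 := measure_add_measure_compl (μ := ϑ x) hsm
      rw [h1, add_zero, measure_univ] at h3
      exact h3
    rw [h2, Measure.dirac_apply_of_mem hps]
  · have h2 : (ϑ x) s = 0 :=
      measure_mono_null (fun X hX => by
        simp only [Set.mem_compl_iff, Set.mem_singleton_iff]
        intro hXe; exact hps (hXe ▸ hX)) hball
    rw [h2, Measure.dirac_apply' _ hsm, Set.indicator_of_notMem hps]
/-- for `u ∈ C²(Ω, ℝᴺ)`, every diffuse hessian is a.e. the Dirac mass at the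
classical hessian, and hence `u` is a `𝒟`-solution of `F(Du, D²u) = 0` iff it is a
classical (strong) solution a.e. on `Ω`. -/
theorem stmt18 {n N : ℕ} (Ω : Set (Fin n → ℝ)) (hΩ : IsOpen Ω)
    (u : (Fin n → ℝ) → (Fin N → ℝ)) (hu : ContDiffOn ℝ 2 u Ω)
    (F : (Fin N → Fin n → ℝ) → (Fin N → Fin n → Fin n → ℝ) → (Fin N → ℝ))
    (hF1 : ∀ X, Measurable fun P => F P X)
    (hF2 : ∀ P, Continuous (F P)) :
    (∀ ϑ : (Fin n → ℝ) → MeasureTheory.Measure (OnePoint (Fin N → Fin n → Fin n → ℝ)),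
      DiffuseHessian Ω u ϑ →
        ∀ᵐ x ∂(MeasureTheory.volume.restrict Ω),
          ϑ x = MeasureTheory.Measure.dirac (OnePoint.some (hessTensor u x))) ∧
    ((∀ ϑ : (Fin n → ℝ) → MeasureTheory.Measure (OnePoint (Fin N → Fin n → Fin n → ℝ)),
        DiffuseHessian Ω u ϑ →
          ∀ᵐ x ∂(MeasureTheory.volume.restrict Ω),
            ∀ X : Fin N → Fin n → Fin n → ℝ,
              MemSupp (ϑ x) (OnePoint.some X) → F (gradm u x) X = 0) ↔
      (∀ᵐ x ∂(MeasureTheory.volume.restrict Ω),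
        F (gradm u x) (hessTensor u x) = 0)) := by
  constructor
  · intro ϑ hϑ
    exact P1 hΩ hu hϑ
  constructor
  · intro hma
    have hd := diffuse_dirac hΩ hu
    have h1 := hma _ hd
    filter_upwards [h1] with x hx
    apply hx (hessTensor u x)
    intro U hU hpU
    rw [Measure.dirac_apply_of_mem hpU]
    exact zero_lt_one
  · intro hclass ϑ hϑ
    filter_upwards [P1 hΩ hu hϑ, hclass] with x hx1 hx2
    intro X hX
    have hXeq : OnePoint.some X = OnePoint.some (hessTensor u x) := by
      by_contra hne
      have hU : IsOpen ({OnePoint.some (hessTensor u x)}ᶜ :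
          Set (OnePoint (Fin N → Fin n → Fin n → ℝ))) := isOpen_compl_singleton
      have h3 := hX _ hU (by simpa using hne)
      rw [hx1, Measure.dirac_apply' _ hU.measurableSet] at h3
      simp at h3
    have : X = hessTensor u x := by
      simpa [OnePoint.coe_eq_coe] using hXeq
    rw [this]
    exact hx2
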